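/- With the setup of two confocal origin-centered ellipses with semi-axes (a, b) and (a′, b′), c² = a² − b² = a′² − b′², and their polar-image circles with respect to a radius-ρ circle centered at f₁ = (−c, 0) (centers (−c − ρ²c/b², 0), (−c − ρ²c/b′², 0), radii ρ²a/b², ρ²a′/b′²), the limiting points of the pencil generated by these two circles are (−c, 0) and (−c + ρ²/c, 0). -/

import Mathlib

/-- Inversion of the plane (radius 1) centered at `ℓ`, in coordinates. -/
noncomputable def invAt (ℓ p : ℝ × ℝ) : ℝ × ℝ :=
  (ℓ.1 + (p.1 - ℓ.1) / ((p.1 - ℓ.1) ^ 2 + (p.2 - ℓ.2) ^ 2),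
   ℓ.2 + (p.2 - ℓ.2) / ((p.1 - ℓ.1) ^ 2 + (p.2 - ℓ.2) ^ 2))

/-- The circle of center `(x₀, y₀)` and radius `s` in coordinates. -/
def circ (x₀ y₀ s : ℝ) : Set (ℝ × ℝ) :=
  {p | (p.1 - x₀) ^ 2 + (p.2 - y₀) ^ 2 = s ^ 2}

/-- Algebraic core of circle inversion. -/
lemma inv_key (u v M r : ℝ) (hk : M ^ 2 - r ^ 2 ≠ 0)
    (hp : (u - M) ^ 2 + v ^ 2 = r ^ 2) :
    (u / (u ^ 2 + v ^ 2) - M / (M ^ 2 - r ^ 2)) ^ 2 +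
      (v / (u ^ 2 + v ^ 2)) ^ 2 = (r / (M ^ 2 - r ^ 2)) ^ 2 := by
  set k := M ^ 2 - r ^ 2 with hkdef
  have hD : u ^ 2 + v ^ 2 = 2 * u * M - k := by rw [hkdef]; nlinarith [hp]
  have hD0 : u ^ 2 + v ^ 2 ≠ 0 := by
    intro h
    have hu0 : u = 0 := by nlinarith [sq_nonneg u, sq_nonneg v]
    have hv0 : v = 0 := by nlinarith [sq_nonneg u, sq_nonneg v]
    subst hu0; subst hv0
    apply hk
    nlinarith [hD]
  have key : (u * k - M * (u ^ 2 + v ^ 2)) ^ 2 + (v * k) ^ 2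
      = (r * (u ^ 2 + v ^ 2)) ^ 2 := by
    have h1 : k ^ 2 - 2 * u * k * M + M ^ 2 * (u ^ 2 + v ^ 2)
        = r ^ 2 * (u ^ 2 + v ^ 2) := by
      rw [hD, hkdef]; ring
    nlinarith [hD, h1]
  have expand : (u / (u ^ 2 + v ^ 2) - M / k) ^ 2 + (v / (u ^ 2 + v ^ 2)) ^ 2
      = ((u * k - M * (u ^ 2 + v ^ 2)) ^ 2 + (v * k) ^ 2) / ((u ^ 2 + v ^ 2) * k) ^ 2 := by
    field_simp
  rw [expand, key]
  field_simp

/-- Inversion centered at `(L, 0)` maps the circle of center `(m, 0)` and radius `r`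
(not through the center of inversion) to a circle. -/
lemma inv_circle (L m r : ℝ) (hk : (m - L) ^ 2 - r ^ 2 ≠ 0)
    (p : ℝ × ℝ) (hp : p ∈ circ m 0 r) :
    invAt (L, 0) p ∈ circ (L + (m - L) / ((m - L) ^ 2 - r ^ 2)) 0
      (r / ((m - L) ^ 2 - r ^ 2)) := by
  have hp' : (p.1 - m) ^ 2 + (p.2 - 0) ^ 2 = r ^ 2 := hp
  have h := inv_key (p.1 - L) p.2 (m - L) r hk (by nlinarith [hp'])
  simp only [invAt, circ, Set.mem_setOf_eq]
  convert h using 2 <;> ring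

lemma circ_congr {x y s x' y' s' : ℝ} (hx : x = x') (hy : y = y')
    (hs : s ^ 2 = s' ^ 2) : circ x y s = circ x' y' s' := by
  subst hx; subst hy; unfold circ; simp [hs]

lemma transfer (L m r x₀ s : ℝ) (hk : (m - L) ^ 2 - r ^ 2 ≠ 0)
    (hx : L + (m - L) / ((m - L) ^ 2 - r ^ 2) = x₀)
    (hs : (r / ((m - L) ^ 2 - r ^ 2)) ^ 2 = s ^ 2) :
    ∀ p ∈ circ m 0 r, invAt (L, 0) p ∈ circ x₀ 0 s := by
  intro p hp
  have h := inv_circle L m r hk p hp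
  rwa [circ_congr hx rfl hs] at h

/-- For two origin-centered confocal ellipses with semi-axes `(a, b)`
and `(a′, b′)`, `c² = a² − b² = a′² − b′²`, the polar-image circles with respect to a
radius-`ρ` circle centered at `f₁ = (−c, 0)` have centers `(−c − ρ²c/b², 0)`,
`(−c − ρ²c/b′², 0)` and radii `ρ²a/b²`, `ρ²a′/b′²`; the limiting points of the
pencil generated by these two circles are `(−c, 0)` and `(−c + ρ²/c, 0)`: inversion
centered at either point maps both circles to concentric circles. -/
theorem limiting_points_of_polar_image_circles
    (a b a' b' c ρ : ℝ)
    (hab : 0 < b ∧ b < a) (hab' : 0 < b' ∧ b' < a') (ha' : a' < a)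
    (hc : 0 < c) (hc2 : a ^ 2 - b ^ 2 = c ^ 2) (hc2' : a' ^ 2 - b' ^ 2 = c ^ 2)
    (hρ : 0 < ρ)
    (ℓ : ℝ × ℝ) (hℓ : ℓ = (-c, 0) ∨ ℓ = (-c + ρ ^ 2 / c, 0)) :
    ∃ x₀ y₀ s₁ s₂ : ℝ, 0 < s₁ ∧ 0 < s₂ ∧
      (∀ p ∈ circ (-c - ρ ^ 2 * c / b ^ 2) 0 (ρ ^ 2 * a / b ^ 2),
        invAt ℓ p ∈ circ x₀ y₀ s₁) ∧
      (∀ p ∈ circ (-c - ρ ^ 2 * c / b' ^ 2) 0 (ρ ^ 2 * a' / b' ^ 2),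
        invAt ℓ p ∈ circ x₀ y₀ s₂) := by
  obtain ⟨hb, hba⟩ := hab
  obtain ⟨hb', hba'⟩ := hab'
  have ha : 0 < a := hb.trans hba
  have ha'0 : 0 < a' := hb'.trans hba'
  have hbne : (b : ℝ) ≠ 0 := ne_of_gt hb
  have hbne' : (b' : ℝ) ≠ 0 := ne_of_gt hb'
  have hcne : (c : ℝ) ≠ 0 := ne_of_gt hc
  have hρne : (ρ : ℝ) ≠ 0 := ne_of_gt hρ
  have hane : (a : ℝ) ≠ 0 := ne_of_gt ha
  have hane' : (a' : ℝ) ≠ 0 := ne_of_gt ha'0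
  rcases hℓ with rfl | rfl
  · -- limiting point ℓ = (-c, 0)
    have e1 : ((-c - ρ ^ 2 * c / b ^ 2) - (-c)) ^ 2 - (ρ ^ 2 * a / b ^ 2) ^ 2
        = -(ρ ^ 4 / b ^ 2) := by
      field_simp
      linear_combination (-(ρ ^ 4)) * hc2
    have e1' : ((-c - ρ ^ 2 * c / b' ^ 2) - (-c)) ^ 2 - (ρ ^ 2 * a' / b' ^ 2) ^ 2
        = -(ρ ^ 4 / b' ^ 2) := by
      field_simp
      linear_combination (-(ρ ^ 4)) * hc2'
    refine ⟨-c + c / ρ ^ 2, 0, a / ρ ^ 2, a' / ρ ^ 2, by positivity, by positivity, ?_, ?_⟩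
    · exact transfer _ _ _ _ _
        (by rw [e1]; exact neg_ne_zero.mpr (by positivity))
        (by rw [e1]; field_simp; ring)
        (by rw [e1]; field_simp)
    · exact transfer _ _ _ _ _
        (by rw [e1']; exact neg_ne_zero.mpr (by positivity))
        (by rw [e1']; field_simp; ring)
        (by rw [e1']; field_simp)
  · -- limiting point ℓ = (-c + ρ²/c, 0)
    have e2 : ((-c - ρ ^ 2 * c / b ^ 2) - (-c + ρ ^ 2 / c)) ^ 2 - (ρ ^ 2 * a / b ^ 2) ^ 2
        = ρ ^ 4 * a ^ 2 / (b ^ 2 * c ^ 2) := by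
      field_simp
      linear_combination (-(ρ ^ 4 * (b ^ 2 + c ^ 2))) * hc2
    have e2' : ((-c - ρ ^ 2 * c / b' ^ 2) - (-c + ρ ^ 2 / c)) ^ 2 - (ρ ^ 2 * a' / b' ^ 2) ^ 2
        = ρ ^ 4 * a' ^ 2 / (b' ^ 2 * c ^ 2) := by
      field_simp
      linear_combination (-(ρ ^ 4 * (b' ^ 2 + c ^ 2))) * hc2'
    have hM2 : (-c - ρ ^ 2 * c / b ^ 2) - (-c + ρ ^ 2 / c) = -(ρ ^ 2 * a ^ 2) / (b ^ 2 * c) := by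
      field_simp
      linear_combination ρ ^ 2 * hc2
    have hM2' : (-c - ρ ^ 2 * c / b' ^ 2) - (-c + ρ ^ 2 / c) = -(ρ ^ 2 * a' ^ 2) / (b' ^ 2 * c) := by
      field_simp
      linear_combination ρ ^ 2 * hc2'
    refine ⟨-c + ρ ^ 2 / c - c / ρ ^ 2, 0, c ^ 2 / (ρ ^ 2 * a), c ^ 2 / (ρ ^ 2 * a'),
      by positivity, by positivity, ?_, ?_⟩
    · exact transfer _ _ _ _ _
        (by rw [e2]; positivity)
        (by rw [e2, hM2]; field_simp; ring)
        (by rw [e2]; field_simp)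
    · exact transfer _ _ _ _ _
        (by rw [e2']; positivity)
        (by rw [e2', hM2']; field_simp; ring)
        (by rw [e2']; field_simp)
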